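/- For every integer r ≥ 3, φ_r(c) = 0 for all c ∈ (0, 1/4]; moreover, the function φ_3 is strictly increasing on the interval (1/4, 1/2). -/

import Mathlib

/-- `ξ(c) = ⌈1/(1 - 2c)⌉`. -/
noncomputable def xi (c : ℝ) : ℕ := ⌈1 / (1 - 2 * c)⌉₊

/-- `√(1 - 2 ξ(c) c / (ξ(c) - 1))`. -/
noncomputable def sqc (c : ℝ) : ℝ :=
  Real.sqrt (1 - 2 * (xi c : ℝ) * c / ((xi c : ℝ) - 1))

/-- The large coordinate `x` of the optimal vector `x_c`. -/
noncomputable def xval (c : ℝ) : ℝ := 1 / (xi c : ℝ) + (1 / (xi c : ℝ)) * sqc c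

/-- The small coordinate `y` of the optimal vector `x_c`. -/
noncomputable def yval (c : ℝ) : ℝ :=
  1 / (xi c : ℝ) - (((xi c : ℝ) - 1) / (xi c : ℝ)) * sqc c

/-- `φ_r(c) = C(s-1, r) x^r + C(s-1, r-1) x^{r-1} y` where `s = ξ(c)`. -/
noncomputable def phiF (r : ℕ) (c : ℝ) : ℝ :=
  ((xi c - 1).choose r : ℝ) * xval c ^ r +
    ((xi c - 1).choose (r - 1) : ℝ) * xval c ^ (r - 1) * yval c

lemma cast_choose_three (n : ℕ) : ((n.choose 3 : ℕ) : ℝ) = n * (n - 1) * (n - 2) / 6 := by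
  induction n with
  | zero => norm_num
  | succ m ih =>
    have h : (m + 1).choose 3 = m.choose 2 + m.choose 3 := Nat.choose_succ_succ' m 2
    rw [h]
    push_cast [Nat.cast_choose_two]
    push_cast at ih
    rw [ih]; ring

lemma xi_small {c : ℝ} (hc : c ∈ Set.Ioc (0 : ℝ) (1 / 4)) : xi c = 2 := by
  obtain ⟨h0, h4⟩ := hc
  have hd : (0:ℝ) < 1 - 2 * c := by linarith
  rw [xi, Nat.ceil_eq_iff (by norm_num)]
  constructor
  · push_cast
    rw [lt_div_iff₀ hd]; linarith
  · rw [div_le_iff₀ hd]; push_cast; linarith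

lemma xi_big {c : ℝ} (hc : c ∈ Set.Ioo (1/4 : ℝ) (1/2)) : 3 ≤ xi c := by
  obtain ⟨h1, h2⟩ := hc
  have hd : (0:ℝ) < 1 - 2 * c := by linarith
  have h2' : 2 < xi c := by
    rw [xi]
    refine Nat.lt_ceil.mpr ?_
    push_cast
    rw [lt_div_iff₀ hd]; linarith
  omega

/-- key structural facts on (1/4, 1/2) -/
lemma phi_struct {c : ℝ} (hc : c ∈ Set.Ioo (1/4 : ℝ) (1/2)) :
    3 ≤ xi c ∧ 0 ≤ sqc c ∧ sqc c < 1 / ((xi c : ℝ) - 1) ∧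
      (sqc c)^2 = 1 - 2 * (xi c : ℝ) * c / ((xi c : ℝ) - 1) ∧
      phiF 3 c = ((xi c:ℝ) - 1) * ((xi c:ℝ) - 2) *
        (1 - 3 * (sqc c)^2 - 2 * (sqc c)^3) / (6 * (xi c:ℝ)^2) := by
  obtain ⟨h1, h2⟩ := hc
  have hd : (0:ℝ) < 1 - 2 * c := by linarith
  have hs3 : 3 ≤ xi c := xi_big ⟨h1, h2⟩
  have hs3' : (3:ℝ) ≤ (xi c : ℝ) := by exact_mod_cast hs3
  set s : ℝ := (xi c : ℝ) with hs
  have hs0 : s ≠ 0 := by linarith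
  have hs1 : (0:ℝ) < s - 1 := by linarith
  have hub : 1 / (1 - 2*c) ≤ s := Nat.le_ceil _
  have hlb : s - 1 < 1 / (1 - 2*c) := by
    have h := Nat.ceil_lt_add_one (show (0:ℝ) ≤ 1/(1-2*c) by positivity)
    have h' : s < 1/(1-2*c) + 1 := h
    linarith
  have hub' : 2 * s * c ≤ s - 1 := by
    rw [div_le_iff₀ hd] at hub; nlinarith
  have hlb' : s - 2 < 2 * (s - 1) * c := by
    rw [lt_div_iff₀ hd] at hlb; nlinarith
  have harg0 : 0 ≤ 1 - 2 * s * c / (s - 1) := by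
    rw [sub_nonneg, div_le_one hs1]; linarith
  have htsq : (sqc c)^2 = 1 - 2 * s * c / (s - 1) := Real.sq_sqrt harg0
  have ht0 : 0 ≤ sqc c := Real.sqrt_nonneg _
  have hdiv : 2*s*c/(s-1) * (s-1) = 2*s*c := div_mul_cancel₀ _ hs1.ne'
  have key : 1 - 2*s*c/(s-1) < (1/(s-1))^2 := by
    rw [div_pow, one_pow, lt_div_iff₀ (by positivity)]
    nlinarith [hdiv, hlb', hs3']
  have htlt : sqc c < 1 / (s - 1) := by
    rw [sqc, ← hs, Real.sqrt_lt' (by positivity)]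
    exact key
  refine ⟨hs3, ht0, htlt, htsq, ?_⟩
  have hcast : ((xi c - 1 : ℕ) : ℝ) = s - 1 := by
    have h1' : 1 ≤ xi c := by omega
    push_cast [h1']
    rw [hs]
  have hch2 : (((xi c - 1).choose 2 : ℕ) : ℝ) = (s-1) * (s-2) / 2 := by
    rw [Nat.cast_choose_two, hcast]; ring
  have hch3 : (((xi c - 1).choose 3 : ℕ) : ℝ) = (s-1) * (s-2) * (s-3) / 6 := by
    rw [cast_choose_three, hcast]; ring
  set t := sqc c with htdef
  have hx : xval c = (1 + t) / s := by rw [xval, ← hs]; field_simp; rfl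
  have hy : yval c = (1 - (s - 1) * t) / s := by rw [yval, ← hs]; field_simp; rfl
  show ((xi c - 1).choose 3 : ℝ) * xval c ^ 3 +
    ((xi c - 1).choose 2 : ℝ) * xval c ^ 2 * yval c = _
  rw [hch2, hch3, hx, hy]
  field_simp
  ring

set_option maxHeartbeats 1000000 in
theorem phiF_zero_and_increasing (r : ℕ) (hr : 3 ≤ r) :
    (∀ c ∈ Set.Ioc (0 : ℝ) (1 / 4), phiF r c = 0) ∧
      StrictMonoOn (phiF 3) (Set.Ioo (1 / 4 : ℝ) (1 / 2)) := by
  constructor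
  · intro c hc
    have h2 : xi c = 2 := xi_small hc
    have hr1 : (1:ℕ) < r := by omega
    have hr2 : (1:ℕ) < r - 1 := by omega
    rw [phiF, h2]
    norm_num [Nat.choose_eq_zero_of_lt hr1, Nat.choose_eq_zero_of_lt hr2]
  · intro c1 hc1 c2 hc2 hlt
    rw [Set.mem_Ioo] at hc1 hc2
    obtain ⟨hs3a, ht10, ht1lt, ht1sq, hphi1⟩ := phi_struct (Set.mem_Ioo.mpr hc1)
    obtain ⟨hs3b, ht20, ht2lt, ht2sq, hphi2⟩ := phi_struct (Set.mem_Ioo.mpr hc2)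
    set a : ℝ := (xi c1 : ℝ) with ha
    set b : ℝ := (xi c2 : ℝ) with hb
    set t1 := sqc c1 with ht1
    set t2 := sqc c2 with ht2
    clear_value a b t1 t2
    have ha3 : (3:ℝ) ≤ a := by rw [ha]; exact_mod_cast hs3a
    have hb3 : (3:ℝ) ≤ b := by rw [hb]; exact_mod_cast hs3b
    have hsle : xi c1 ≤ xi c2 := by
      have hd2 : (0:ℝ) < 1 - 2 * c2 := by linarith [hc2.2]
      refine Nat.ceil_le_ceil ?_
      apply one_div_le_one_div_of_le hd2
      linarith
    rw [hphi1, hphi2]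
    rcases eq_or_lt_of_le hsle with heq | hslt
    · -- same piece
      have hab : a = b := by rw [ha, hb, heq]
      have ha1 : (0:ℝ) < a - 1 := by linarith
      have hc1p : (0:ℝ) < c1 := by linarith [hc1.1]
      have hsqlt : t2^2 < t1^2 := by
        rw [ht1sq, ht2sq, ← hab]
        have h1 : 2 * a * c1 / (a-1) < 2 * a * c2 / (a-1) := by
          rw [div_lt_div_iff₀ ha1 ha1]
          nlinarith [mul_pos (sub_pos.mpr hlt) (mul_pos (show (0:ℝ) < 2*a by linarith) ha1)]
        linarith
      have htlt : t2 < t1 := by nlinarith [ht10, ht20, hsqlt]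
      have hX : 3*t2^2 + 2*t2^3 < 3*t1^2 + 2*t1^3 := by
        have hfac : 0 < (t1 - t2) * (3*(t1+t2) + 2*(t1^2 + t1*t2 + t2^2)) := by
          apply mul_pos (by linarith)
          nlinarith [mul_nonneg ht10 ht20, mul_nonneg ht20 ht20, sq_nonneg t1]
        nlinarith [hfac]
      rw [← hab]
      have h6 : (0:ℝ) < 6 * a^2 := by positivity
      have hpos : (0:ℝ) < (a-1)*(a-2) := by nlinarith
      have hnum : (a-1)*(a-2)*(1 - 3*t1^2 - 2*t1^3) < (a-1)*(a-2)*(1 - 3*t2^2 - 2*t2^3) :=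
        mul_lt_mul_of_pos_left (by linarith) hpos
      rw [div_lt_div_iff₀ h6 h6]
      exact mul_lt_mul_of_pos_right hnum h6
    · -- different pieces
      have hba : a + 1 ≤ b := by
        rw [ha, hb]
        exact_mod_cast Nat.succ_le_of_lt hslt
      clear ht1lt ht1sq ht2sq hphi1 hphi2 ht1 ht2 hc1 hc2 hlt hsle hslt hs3a hs3b ha hb hr
      have hb1 : (0:ℝ) < b - 1 := by linarith
      set u : ℝ := 1 / (b - 1) with hu
      have hupos : (0:ℝ) < u := by positivity
      have hQ : 3*t2^2 + 2*t2^3 < 3*u^2 + 2*u^3 := by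
        have hexp : (u - t2) * (3*(u+t2) + 2*(u^2 + u*t2 + t2^2))
            = 3*u^2 + 2*u^3 - 3*t2^2 - 2*t2^3 := by ring
        have hfac : 0 < (u - t2) * (3*(u+t2) + 2*(u^2 + u*t2 + t2^2)) := by
          apply mul_pos (by linarith [ht2lt])
          nlinarith [mul_nonneg ht20 ht20, mul_nonneg hupos.le ht20, sq_nonneg u]
        linarith [hexp ▸ hfac]
      have hQ' : (b-1)^3 * (3*u^2 + 2*u^3) = 3*(b-1) + 2 := by
        rw [hu]; field_simp
      have step1 : b^2 * (b-3) < (b-1)^3 * (1 - 3*t2^2 - 2*t2^3) := by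
        have hm := mul_lt_mul_of_pos_left hQ (pow_pos hb1 3)
        nlinarith [hm, hQ']
      -- chain
      have e1 : (a-1) * (a-2) * (1 - 3*t1^2 - 2*t1^3) / (6*a^2)
          ≤ (a-1) * (a-2) / (6*a^2) := by
        rw [div_le_div_iff₀ (by positivity) (by positivity)]
        have hq1 : (0:ℝ) ≤ 3*t1^2 + 2*t1^3 := by
          nlinarith [mul_nonneg (mul_nonneg ht10 ht10) ht10, sq_nonneg t1]
        have hq2 : (0:ℝ) ≤ (a-1)*(a-2)*(6*a^2) :=
          mul_nonneg (mul_nonneg (by linarith) (by linarith)) (by positivity)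
        nlinarith [mul_nonneg hq2 hq1]
      have e2 : (a-1) * (a-2) / (6*a^2) ≤ (b-2) * (b-3) / (6*(b-1)^2) := by
        rw [div_le_div_iff₀ (by positivity) (by positivity)]
        have hfac : 0 ≤ (b-1-a) * (3*a*(b-1) - 2*a - 2*(b-1)) := by
          apply mul_nonneg (by linarith)
          nlinarith [mul_nonneg (show (0:ℝ) ≤ a-2 by linarith) (show (0:ℝ) ≤ b-3 by linarith)]
        nlinarith [hfac]
      have e3 : (b-2) * (b-3) / (6*(b-1)^2)
          < (b-1) * (b-2) * (1 - 3*t2^2 - 2*t2^3) / (6*b^2) := by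
        rw [div_lt_div_iff₀ (by positivity) (by positivity)]
        have hm := mul_lt_mul_of_pos_left step1 (show (0:ℝ) < 6*(b-2) by linarith)
        nlinarith [hm]

      linarith [e1, e2, e3]
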